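/- In an inner product category, for an isomorphism h : X → Y the following are equivalent: (i) both h and h* are isometries; (ii) h (equivalently h^{-1}) is an isometry; (iii) h† = φ_Y^{-1} h^{-1} φ_X (equivalently h = φ_X (h^{-1})† φ_Y^{-1}); (iv) h^{-1} = h*. -/
import Mathlib


open CategoryTheory

universe v u

/-- An (achiral) involutive category: a contravariant endofunctor `(−)†`
together with a natural isomorphism `ι : X → X††` satisfying `ι_{X†} ≫ (ι_X)† = 1`. -/
structure Involutive (C : Type u) [Category.{v} C] where
  dob : C → C
  dmap : ∀ {X Y : C}, (X ⟶ Y) → (dob Y ⟶ dob X)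
  dmap_id : ∀ X : C, dmap (𝟙 X) = 𝟙 (dob X)
  dmap_comp : ∀ {X Y Z : C} (f : X ⟶ Y) (g : Y ⟶ Z), dmap (f ≫ g) = dmap g ≫ dmap f
  ι : ∀ X : C, X ⟶ dob (dob X)
  ιinv : ∀ X : C, dob (dob X) ⟶ X
  ι_hom_inv : ∀ X : C, ι X ≫ ιinv X = 𝟙 X
  ι_inv_hom : ∀ X : C, ιinv X ≫ ι X = 𝟙 (dob (dob X))
  ι_natural : ∀ {X Y : C} (f : X ⟶ Y), f ≫ ι Y = ι X ≫ dmap (dmap f)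
  ι_dagger : ∀ X : C, ι (dob X) ≫ dmap (ι X) = 𝟙 (dob X)

/-- A unitary structure on an involutive category: isomorphisms `φ_X : X → X†`
with `φ_{X†} = (φ_X⁻¹)†` and `φ_X ≫ φ_{X†} = ι_X`. -/
structure UnitaryStruct {C : Type u} [Category.{v} C] (D : Involutive C) where
  φ : ∀ X : C, X ⟶ D.dob X
  φinv : ∀ X : C, D.dob X ⟶ X
  φ_hom_inv : ∀ X : C, φ X ≫ φinv X = 𝟙 X
  φ_inv_hom : ∀ X : C, φinv X ≫ φ X = 𝟙 (D.dob X)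
  u1 : ∀ X : C, φ (D.dob X) = D.dmap (φinv X)
  u2 : ∀ X : C, φ X ≫ φ (D.dob X) = D.ι X

/-- An inner product combinator on an involutive category. -/
structure IPStruct {C : Type u} [Category.{v} C] (D : Involutive C) where
  ip : ∀ {A B X : C}, (A ⟶ X) → (B ⟶ X) → (A ⟶ D.dob B)

/-- The dual inner product `⟨h|k⟩^ι := ι_{A†} ≫ ⟨k†|h†⟩† ≫ ι_B⁻¹`. -/
def IPStruct.dual {C : Type u} [Category.{v} C] {D : Involutive C} (S : IPStruct D)
    {X A B : C} (h : X ⟶ A) (k : X ⟶ B) : D.dob A ⟶ B :=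
  D.ι (D.dob A) ≫ D.dmap (S.ip (D.dmap k) (D.dmap h)) ≫ D.ιinv B

/-- An inner product category: axioms [IP.1]–[IP.4]. -/
structure InnerProduct {C : Type u} [Category.{v} C] (D : Involutive C) extends IPStruct D where
  ip1 : ∀ {A B X Y Z : C} (f : A ⟶ X) (g : B ⟶ X) (h : Y ⟶ A) (k : Z ⟶ B),
    ip (h ≫ f) (k ≫ g) = h ≫ ip f g ≫ D.dmap k
  ip2a : ∀ {A B X : C} (f : A ⟶ X) (g : B ⟶ X),
    D.ι A ≫ toIPStruct.dual (D.dmap f) (D.dmap g) = ip f g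
  ip2b : ∀ {A B X : C} (f : A ⟶ X) (g : B ⟶ X),
    D.ι B ≫ D.dmap (ip f g) = ip g f
  ip3 : ∀ {A B X : C} (f : A ⟶ X) (g : B ⟶ X) (h k : X ⟶ B),
    h ≫ g = 𝟙 X → ip f g ≫ toIPStruct.dual h k = f ≫ k
  ip4 : ∀ {A X Z : C} (f : A ⟶ Z) (g : A ⟶ X) (h k : X ⟶ A),
    g ≫ h = 𝟙 A → toIPStruct.dual f g ≫ ip h k = D.dmap (k ≫ f)

/-- The inner product induced by a unitary structure: `⟨f|g⟩ := f ≫ φ_X ≫ g†`. -/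
def UnitaryStruct.uip {C : Type u} [Category.{v} C] {D : Involutive C} (U : UnitaryStruct D)
    {A B X : C} (f : A ⟶ X) (g : B ⟶ X) : A ⟶ D.dob B :=
  f ≫ U.φ X ≫ D.dmap g

/-- The dual inner product induced by a unitary structure. -/
def UnitaryStruct.udual {C : Type u} [Category.{v} C] {D : Involutive C} (U : UnitaryStruct D)
    {X A B : C} (h : X ⟶ A) (k : X ⟶ B) : D.dob A ⟶ B :=
  D.ι (D.dob A) ≫ D.dmap (U.uip (D.dmap k) (D.dmap h)) ≫ D.ιinv B

/-- The inner adjoint `f* := φ_B ≫ f† ≫ φ_A⁻¹` of `f : A ⟶ B`. -/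
def UnitaryStruct.adj {C : Type u} [Category.{v} C] {D : Involutive C} (U : UnitaryStruct D)
    {A B : C} (f : A ⟶ B) : B ⟶ A :=
  U.φ B ≫ D.dmap f ≫ U.φinv A

/-- An isometry: `⟨fh|gh⟩ = ⟨f|g⟩` for all maps into the domain of `h`. -/
def IsIsometry {C : Type u} [Category.{v} C] {D : Involutive C} (U : UnitaryStruct D)
    {X Y : C} (h : X ⟶ Y) : Prop :=
  ∀ (A B : C) (f : A ⟶ X) (g : B ⟶ X), U.uip (f ≫ h) (g ≫ h) = U.uip f g

section Aux

variable {C : Type u} [Category.{v} C] {D : Involutive C} (U : UnitaryStruct D)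

lemma isIsometry_iff {X Y : C} (h : X ⟶ Y) :
    IsIsometry U h ↔ h ≫ U.φ Y ≫ D.dmap h = U.φ X := by
  constructor
  · intro H
    have := H X X (𝟙 X) (𝟙 X)
    simpa [UnitaryStruct.uip, D.dmap_id] using this
  · intro E A B f g
    simp [UnitaryStruct.uip, D.dmap_comp, reassoc_of% E]

lemma isometry_eq_inv {X Y : C} (h : X ⟶ Y) (hinv : Y ⟶ X)
    (hh' : hinv ≫ h = 𝟙 Y)
    (E : h ≫ U.φ Y ≫ D.dmap h = U.φ X) :
    hinv ≫ U.φ X ≫ D.dmap hinv = U.φ Y := by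
  rw [← E]
  simp only [reassoc_of% hh', Category.assoc]
  rw [← D.dmap_comp, hh', D.dmap_id, Category.comp_id]

end Aux

/-- For an isomorphism `h : X ⟶ Y` (with inverse `hinv`) in an inner product category
the following are equivalent: (i) both `h` and `h*` are isometries;
(ii) `h` (equivalently `h⁻¹`) is an isometry;
(iii) `h† = φ_Y⁻¹ ≫ h⁻¹ ≫ φ_X` (equivalently `h = φ_X ≫ (h⁻¹)† ≫ φ_Y⁻¹`);
(iv) `h⁻¹ = h*`. -/
theorem unitary_iso_characterization {C : Type u} [Category.{v} C]
    (D : Involutive C) (U : UnitaryStruct D) {X Y : C}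
    (h : X ⟶ Y) (hinv : Y ⟶ X)
    (hh : h ≫ hinv = 𝟙 X) (hh' : hinv ≫ h = 𝟙 Y) :
    ((IsIsometry U h ∧ IsIsometry U (U.adj h)) ↔ (IsIsometry U h ∨ IsIsometry U hinv)) ∧
    ((IsIsometry U h ∨ IsIsometry U hinv) ↔
      (D.dmap h = U.φinv Y ≫ hinv ≫ U.φ X ∧ h = U.φ X ≫ D.dmap hinv ≫ U.φinv Y)) ∧
    ((D.dmap h = U.φinv Y ≫ hinv ≫ U.φ X ∧ h = U.φ X ≫ D.dmap hinv ≫ U.φinv Y) ↔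
      hinv = U.adj h) := by
  have sym : IsIsometry U h ↔ IsIsometry U hinv := by
    rw [isIsometry_iff, isIsometry_iff]
    exact ⟨isometry_eq_inv U h hinv hh', isometry_eq_inv U hinv h hh⟩
  have c1 : IsIsometry U h ↔ D.dmap h = U.φinv Y ≫ hinv ≫ U.φ X := by
    rw [isIsometry_iff]
    constructor
    · intro E
      have e1 : U.φ Y ≫ D.dmap h = hinv ≫ U.φ X := by
        rw [← E]; simp [reassoc_of% hh']
      rw [← e1, ← Category.assoc, U.φ_inv_hom, Category.id_comp]
    · intro e
      rw [e]
      simp [reassoc_of% U.φ_hom_inv Y, reassoc_of% hh]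
  have c2 : IsIsometry U hinv ↔ h = U.φ X ≫ D.dmap hinv ≫ U.φinv Y := by
    rw [isIsometry_iff]
    constructor
    · intro E
      have e1 : U.φ X ≫ D.dmap hinv = h ≫ U.φ Y := by
        rw [← E]; simp [reassoc_of% hh]
      rw [← Category.assoc, e1, Category.assoc, U.φ_hom_inv, Category.comp_id]
    · intro e
      have e1 : U.φ X ≫ D.dmap hinv = h ≫ U.φ Y := by
        rw [e]; simp [U.φ_inv_hom]
      rw [e1]
      simp [reassoc_of% hh']
  have c3 : D.dmap h = U.φinv Y ≫ hinv ≫ U.φ X ↔ hinv = U.adj h := by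
    constructor
    · intro e
      rw [UnitaryStruct.adj, e]
      simp [reassoc_of% U.φ_hom_inv Y, U.φ_hom_inv]
    · intro e
      rw [e, UnitaryStruct.adj]
      simp [reassoc_of% U.φ_inv_hom Y, U.φ_inv_hom]
  have two : (IsIsometry U h ∨ IsIsometry U hinv) ↔
      (D.dmap h = U.φinv Y ≫ hinv ≫ U.φ X ∧ h = U.φ X ≫ D.dmap hinv ≫ U.φinv Y) := by
    constructor
    · intro H
      have h1 : IsIsometry U h := by tauto
      exact ⟨c1.mp h1, c2.mp (sym.mp h1)⟩
    · rintro ⟨e1, _⟩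
      exact Or.inl (c1.mpr e1)
  refine ⟨?_, two, ?_⟩
  · constructor
    · rintro ⟨a, _⟩; exact Or.inl a
    · intro H
      have h1 : IsIsometry U h := by tauto
      have h2 : IsIsometry U hinv := sym.mp h1
      have e : hinv = U.adj h := c3.mp (c1.mp h1)
      exact ⟨h1, e ▸ h2⟩
  · constructor
    · rintro ⟨e1, _⟩; exact c3.mp e1
    · intro e
      have e1 := c3.mpr e
      exact ⟨e1, c2.mp (sym.mp (c1.mpr e1))⟩
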